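/- For any unit spacelike vector X (with respect to g of Lemma 2.1 with R² the constant curvature tensor), the Jacobi operator J(X) satisfies: J(X)X = 0, J(X)V_a = 0 for all a, and the image of J(X)² equals the span of the V_b for which the orthogonally-normalized U-component conditions hold; in particular rank(J(X)) = 2(s-1) and rank(J(X)²) = s-1, independent of X. -/
import Mathlib


open scoped BigOperators

/-- Basis of `ℝ^{3s}`: `(0, a) = U_a`, `(1, a) = V_a`, `(2, a) = T_a`. -/
abbrev BasisIdx (s : ℕ) := Fin 3 × Fin s

/-- The basis vectors `U_a`, `V_a`, `T_a` of `ℝ^{3s}`. -/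
def Uvec {s : ℕ} (a : Fin s) : BasisIdx s → ℝ := Pi.single ((0 : Fin 3), a) 1
def Vvec {s : ℕ} (a : Fin s) : BasisIdx s → ℝ := Pi.single ((1 : Fin 3), a) 1
def Tvec {s : ℕ} (a : Fin s) : BasisIdx s → ℝ := Pi.single ((2 : Fin 3), a) 1

/-- Components of the metric of Lemma 2.1: `g(U_a,U_b) = g_{ab}`,
`g(U_a,V_b) = g(V_b,U_a) = δ_{ab}`, `g(T_a,T_b) = -δ_{ab}`, all else zero. -/
def Gmat {s : ℕ} (gm : Fin s → Fin s → ℝ) : BasisIdx s → BasisIdx s → ℝ :=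
  fun x y =>
    if x.1 = 0 ∧ y.1 = 0 then gm x.2 y.2
    else if (x.1 = 0 ∧ y.1 = 1) ∨ (x.1 = 1 ∧ y.1 = 0) then (if x.2 = y.2 then 1 else 0)
    else if x.1 = 2 ∧ y.1 = 2 then (if x.2 = y.2 then (-1 : ℝ) else 0)
    else 0

/-- The bilinear form determined by the metric components. -/
def gBil {s : ℕ} (gm : Fin s → Fin s → ℝ) (X Y : BasisIdx s → ℝ) : ℝ :=
  ∑ p, ∑ q, X p * Gmat gm p q * Y q

/-- The quadrilinear extension of a component tensor to vectors. -/
def ext {s : ℕ} (F : BasisIdx s → BasisIdx s → BasisIdx s → BasisIdx s → ℝ)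
    (x y z w : BasisIdx s → ℝ) : ℝ :=
  ∑ p, ∑ q, ∑ r, ∑ t, x p * y q * z r * w t * F p q r t

/-- A (component-level) algebraic curvature tensor. -/
def IsACT {ι : Type*} (F : ι → ι → ι → ι → ℝ) : Prop :=
  (∀ x y z w, F x y z w = - F y x z w) ∧
  (∀ x y z w, F x y z w = F z w x y) ∧
  (∀ x y z w, F x y z w + F y z x w + F z x y w = 0)

/-- `R²_{abcd} = δ_{ad}δ_{bc} - δ_{ac}δ_{bd}`, constant sectional curvature `+1`. -/
def R2const (s : ℕ) : Fin s → Fin s → Fin s → Fin s → ℝ :=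
  fun a b c d =>
    (if a = d then (1 : ℝ) else 0) * (if b = c then (1 : ℝ) else 0) -
      (if a = c then (1 : ℝ) else 0) * (if b = d then (1 : ℝ) else 0)

/-- The tensor of Lemma 2.1: `R(U_a,U_b,U_c,U_d) = R¹_{abcd}`, components with
exactly one `T` index equal `R²_{abcd}` (replacing the `T` index by the
corresponding `U` index), all else zero. -/
def bigR {s : ℕ} (R1 R2 : Fin s → Fin s → Fin s → Fin s → ℝ) :
    BasisIdx s → BasisIdx s → BasisIdx s → BasisIdx s → ℝ :=
  fun x y z w =>
    if x.1 = 0 ∧ y.1 = 0 ∧ z.1 = 0 ∧ w.1 = 0 then R1 x.2 y.2 z.2 w.2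
    else if (x.1 = 2 ∧ y.1 = 0 ∧ z.1 = 0 ∧ w.1 = 0) ∨ (x.1 = 0 ∧ y.1 = 2 ∧ z.1 = 0 ∧ w.1 = 0) ∨
            (x.1 = 0 ∧ y.1 = 0 ∧ z.1 = 2 ∧ w.1 = 0) ∨ (x.1 = 0 ∧ y.1 = 0 ∧ z.1 = 0 ∧ w.1 = 2)
      then R2 x.2 y.2 z.2 w.2
    else 0
namespace Stmt7Aux

open Module LinearMap

variable {s : ℕ}

lemma sum3 (f : BasisIdx s → ℝ) :
    ∑ p : BasisIdx s, f p = (∑ a, f (0,a)) + (∑ a, f (1,a)) + (∑ a, f (2,a)) := by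
  rw [Fintype.sum_prod_type, Fin.sum_univ_three]

lemma single_smul_one (p : BasisIdx s) (x : ℝ) :
    Pi.single p x = x • (Pi.single p 1 : BasisIdx s → ℝ) := by
  funext q; simp [Pi.single_apply, mul_ite]

/-! ### gBil evaluation -/

lemma gBil_single (gm : Fin s → Fin s → ℝ) (w : BasisIdx s → ℝ) (p0 : BasisIdx s) :
    gBil gm w (Pi.single p0 1) = ∑ p, w p * Gmat gm p p0 := by
  unfold gBil
  refine Finset.sum_congr rfl fun p _ => ?_
  simp [Pi.single_apply, mul_ite, Finset.sum_ite_eq', eq_comm]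

lemma gBil_V (gm : Fin s → Fin s → ℝ) (w : BasisIdx s → ℝ) (d : Fin s) :
    gBil gm w (Vvec d) = w (0,d) := by
  rw [Vvec, gBil_single, sum3]
  simp [Gmat, Finset.sum_ite_eq', eq_comm]

lemma gBil_T (gm : Fin s → Fin s → ℝ) (w : BasisIdx s → ℝ) (d : Fin s) :
    gBil gm w (Tvec d) = - w (2,d) := by
  rw [Tvec, gBil_single, sum3]
  simp [Gmat, Finset.sum_ite_eq', eq_comm]

lemma gBil_U (gm : Fin s → Fin s → ℝ) (w : BasisIdx s → ℝ) (d : Fin s) :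
    gBil gm w (Uvec d) = (∑ b, w (0,b) * gm b d) + w (1,d) := by
  rw [Uvec, gBil_single, sum3]
  simp [Gmat, Finset.sum_ite_eq', eq_comm]

/-! ### ext evaluation on basis vectors -/

variable (R1 : Fin s → Fin s → Fin s → Fin s → ℝ) (X : BasisIdx s → ℝ)

lemma ext_ss (F : BasisIdx s → BasisIdx s → BasisIdx s → BasisIdx s → ℝ)
    (p0 t0 : BasisIdx s) (y z : BasisIdx s → ℝ) :
    ext F (Pi.single p0 1) y z (Pi.single t0 1) = ∑ q, ∑ r, y q * z r * F p0 q r t0 := by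
  unfold _root_.ext
  simp [Pi.single_apply, ite_mul, mul_ite, Finset.sum_ite_eq', Finset.sum_ite_eq, eq_comm]

lemma extV_left (c : Fin s) (t0 : BasisIdx s) :
    ext (bigR R1 (R2const s)) (Pi.single ((1 : Fin 3), c) 1) X X (Pi.single t0 1) = 0 := by
  rw [ext_ss]; simp [bigR]

lemma extV_right (p0 : BasisIdx s) (d : Fin s) :
    ext (bigR R1 (R2const s)) (Pi.single p0 1) X X (Pi.single ((1 : Fin 3), d) 1) = 0 := by
  rw [ext_ss]; simp [bigR]

lemma extTT (c d : Fin s) :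
    ext (bigR R1 (R2const s)) (Tvec c) X X (Tvec d) = 0 := by
  rw [Tvec, Tvec, ext_ss]; simp [bigR]

lemma extUT (c d : Fin s) :
    ext (bigR R1 (R2const s)) (Uvec c) X X (Tvec d) =
      (if c = d then ∑ b, X (0,b) * X (0,b) else 0) - X (0,c) * X (0,d) := by
  rw [Uvec, Tvec, ext_ss]
  simp only [sum3]
  simp [bigR, R2const, mul_sub, Finset.mul_sum, Finset.sum_sub_distrib,
    mul_ite, ite_mul, mul_one, mul_zero, zero_mul, one_mul,
    Finset.sum_ite_eq', Finset.sum_ite_eq, eq_comm]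
  ring

lemma extTU (c d : Fin s) :
    ext (bigR R1 (R2const s)) (Tvec c) X X (Uvec d) =
      (if c = d then ∑ b, X (0,b) * X (0,b) else 0) - X (0,c) * X (0,d) := by
  rw [Tvec, Uvec, ext_ss]
  simp only [sum3]
  simp [bigR, R2const, mul_sub, Finset.mul_sum, Finset.sum_sub_distrib,
    mul_ite, ite_mul, mul_one, mul_zero, zero_mul, one_mul,
    Finset.sum_ite_eq', Finset.sum_ite_eq, eq_comm]
  ring

lemma extUU (c d : Fin s) :
    ext (bigR R1 (R2const s)) (Uvec c) X X (Uvec d) =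
      (∑ b, ∑ e, X (0,b) * X (0,e) * R1 c b e d)
      + (if c = d then 2 * ∑ b, X (0,b) * X (2,b) else 0)
      - X (0,c) * X (2,d) - X (2,c) * X (0,d) := by
  rw [Uvec, Uvec, ext_ss]
  simp only [sum3]
  simp [bigR, R2const, mul_sub, Finset.mul_sum, Finset.sum_sub_distrib,
    mul_ite, ite_mul, mul_one, mul_zero, zero_mul, one_mul,
    Finset.sum_ite_eq', Finset.sum_ite_eq, eq_comm]
  split_ifs with h
  · subst h
    simp [Finset.sum_add_distrib, two_mul, Finset.sum_sub_distrib, mul_comm]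
    ring
  · simp [Finset.sum_add_distrib, Finset.sum_sub_distrib, Finset.sum_ite_eq]
    ring

/-! ### linear maps -/

/-- `z ↦ (d ↦ ∑ a, z a * M a d)`. -/
noncomputable def rowL (M : Fin s → Fin s → ℝ) : (Fin s → ℝ) →ₗ[ℝ] (Fin s → ℝ) where
  toFun z := fun d => ∑ a, z a * M a d
  map_add' x y := by funext d; simp [add_mul, Finset.sum_add_distrib]
  map_smul' c x := by funext d; simp [Finset.mul_sum, mul_assoc]

lemma rowL_apply (M : Fin s → Fin s → ℝ) (z : Fin s → ℝ) (d : Fin s) :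
    rowL M z d = ∑ a, z a * M a d := rfl

lemma rowL_single (M : Fin s → Fin s → ℝ) (c : Fin s) :
    rowL M (Pi.single c 1) = M c := by
  funext d
  simp [rowL_apply, Pi.single_apply, ite_mul, Finset.sum_ite_eq]

noncomputable def PsiMap (A B : Fin s → Fin s → ℝ) :
    ((Fin s → ℝ) × (Fin s → ℝ)) →ₗ[ℝ] (BasisIdx s → ℝ) :=
  LinearMap.pi fun p =>
    if p.1 = 1 then
      (LinearMap.proj p.2).comp
        ((rowL A).comp (LinearMap.fst ℝ _ _) + (rowL B).comp (LinearMap.snd ℝ _ _))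
    else if p.1 = 2 then
      -((LinearMap.proj p.2).comp ((rowL B).comp (LinearMap.fst ℝ _ _)))
    else 0

lemma PsiMap_apply (A B : Fin s → Fin s → ℝ) (zw : (Fin s → ℝ) × (Fin s → ℝ))
    (p : BasisIdx s) :
    PsiMap A B zw p =
      if p.1 = 1 then rowL A zw.1 p.2 + rowL B zw.2 p.2
      else if p.1 = 2 then -(rowL B zw.1 p.2) else 0 := by
  rw [PsiMap, LinearMap.pi_apply]
  split_ifs <;> simp

noncomputable def PsiV (M : Fin s → Fin s → ℝ) : (Fin s → ℝ) →ₗ[ℝ] (BasisIdx s → ℝ) :=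
  LinearMap.pi fun p =>
    if p.1 = 1 then (LinearMap.proj p.2).comp (rowL M) else 0

lemma PsiV_apply (M : Fin s → Fin s → ℝ) (z : Fin s → ℝ) (p : BasisIdx s) :
    PsiV M z p = if p.1 = 1 then rowL M z p.2 else 0 := by
  rw [PsiV, LinearMap.pi_apply]
  split_ifs <;> simp

noncomputable def Pmap (s : ℕ) : (BasisIdx s → ℝ) →ₗ[ℝ] ((Fin s → ℝ) × (Fin s → ℝ)) :=
  (LinearMap.pi fun d => LinearMap.proj ((0 : Fin 3), d)).prod
    (LinearMap.pi fun d => LinearMap.proj ((2 : Fin 3), d))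

lemma Pmap_apply (y : BasisIdx s → ℝ) :
    Pmap s y = (fun d => y (0, d), fun d => y (2, d)) := rfl

lemma Pmap_surj : Function.Surjective (Pmap s) := by
  rintro ⟨z, w⟩
  refine ⟨fun p => if p.1 = 0 then z p.2 else if p.1 = 2 then w p.2 else 0, ?_⟩
  rw [Pmap_apply]
  refine Prod.ext ?_ ?_ <;> funext d <;> simp

noncomputable def P0map (s : ℕ) : (BasisIdx s → ℝ) →ₗ[ℝ] (Fin s → ℝ) :=
  LinearMap.pi fun d => LinearMap.proj ((0 : Fin 3), d)

lemma P0map_apply (y : BasisIdx s → ℝ) : P0map s y = fun d => y (0, d) := rfl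

lemma P0map_surj : Function.Surjective (P0map s) := by
  intro z
  exact ⟨fun p => if p.1 = 0 then z p.2 else 0, by funext d; simp [P0map_apply]⟩

lemma sum_antisym {n : ℕ} (f : Fin n → Fin n → ℝ) (hf : ∀ i j, f i j = - f j i) :
    ∑ i, ∑ j, f i j = 0 := by
  have h1 : ∑ i, ∑ j, f i j = ∑ j, ∑ i, f i j := Finset.sum_comm
  have h2 : ∑ j : Fin n, ∑ i : Fin n, f i j = - ∑ i, ∑ j, f i j := by
    rw [← Finset.sum_neg_distrib]
    refine Finset.sum_congr rfl fun j _ => ?_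
    rw [← Finset.sum_neg_distrib]
    exact Finset.sum_congr rfl fun i _ => hf i j
  linarith

lemma Pmap_single0 (c : Fin s) :
    Pmap s (Pi.single ((0 : Fin 3), c) 1) = (Pi.single c 1, 0) := by
  rw [Pmap_apply]
  refine Prod.ext ?_ ?_ <;> funext d <;>
    simp [Pi.single_apply, Prod.ext_iff]

lemma Pmap_single1 (c : Fin s) :
    Pmap s (Pi.single ((1 : Fin 3), c) 1) = 0 := by
  rw [Pmap_apply]
  refine Prod.ext ?_ ?_ <;> funext d <;>
    simp [Pi.single_apply, Prod.ext_iff]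

lemma Pmap_single2 (c : Fin s) :
    Pmap s (Pi.single ((2 : Fin 3), c) 1) = (0, Pi.single c 1) := by
  rw [Pmap_apply]
  refine Prod.ext ?_ ?_ <;> funext d <;>
    simp [Pi.single_apply, Prod.ext_iff]

lemma PsiMap_pair0 (A B : Fin s → Fin s → ℝ) (c : Fin s) (p : BasisIdx s) :
    PsiMap A B (Pi.single c 1, 0) p =
      if p.1 = 1 then A c p.2 else if p.1 = 2 then -(B c p.2) else 0 := by
  rw [PsiMap_apply]
  have h0 : rowL B (0 : Fin s → ℝ) = 0 := map_zero _
  simp [rowL_single, h0]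

lemma PsiMap_pair2 (A B : Fin s → Fin s → ℝ) (c : Fin s) (p : BasisIdx s) :
    PsiMap A B ((0 : Fin s → ℝ), Pi.single c 1) p =
      if p.1 = 1 then B c p.2 else 0 := by
  rw [PsiMap_apply]
  have h0 : rowL A (0 : Fin s → ℝ) = 0 := map_zero _
  have h0' : rowL B (0 : Fin s → ℝ) = 0 := map_zero _
  simp [rowL_single, h0, h0']

lemma funext3 {f g : BasisIdx s → ℝ}
    (h0 : ∀ d, f ((0 : Fin 3), d) = g ((0 : Fin 3), d))
    (h1 : ∀ d, f ((1 : Fin 3), d) = g ((1 : Fin 3), d))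
    (h2 : ∀ d, f ((2 : Fin 3), d) = g ((2 : Fin 3), d)) : f = g := by
  funext q
  obtain ⟨j, d⟩ := q
  fin_cases j
  · exact h0 d
  · exact h1 d
  · exact h2 d

end Stmt7Aux

open Stmt7Aux Module LinearMap

/-- for any unit spacelike `X`, the Jacobi operator of the tensor
of Lemma 2.1 (with `R¹` arbitrary and `R²` of constant curvature `+1`)
satisfies `J(X)X = 0`, `J(X)V_a = 0` for all `a`, `rank J(X) = 2(s-1)` and
`rank J(X)² = s-1`, independent of `X` (the image of `J(X)²` is an
`(s-1)`-dimensional span of `V`-vectors). -/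
theorem stmt7 (s : ℕ) (hs : 2 ≤ s) (gm : Fin s → Fin s → ℝ)
    (hgm : ∀ a b, gm a b = gm b a)
    (R1 : Fin s → Fin s → Fin s → Fin s → ℝ) (h1 : IsACT R1)
    (X : BasisIdx s → ℝ) (hX : gBil gm X X = 1)
    (J : Module.End ℝ (BasisIdx s → ℝ))
    (hJ : ∀ y z, gBil gm (J y) z = ext (bigR R1 (R2const s)) y X X z) :
    J X = 0 ∧ (∀ a : Fin s, J (Vvec a) = 0) ∧
    Module.finrank ℝ (LinearMap.range J) = 2 * (s - 1) ∧
    Module.finrank ℝ (LinearMap.range (J ^ 2)) = s - 1 := by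
  classical
  set Aco : Fin s → Fin s → ℝ := fun c d =>
    (∑ b, ∑ e, X (0,b) * X (0,e) * R1 c b e d)
      + (if c = d then 2 * ∑ b, X (0,b) * X (2,b) else 0)
      - X (0,c) * X (2,d) - X (2,c) * X (0,d) with hAco_def
  set Bco : Fin s → Fin s → ℝ := fun c d =>
    (if c = d then ∑ b, X (0,b) * X (0,b) else 0) - X (0,c) * X (0,d) with hBco_def
  -- components of J
  have comp0 : ∀ y d, J y (0,d) = ext (bigR R1 (R2const s)) y X X (Vvec d) :=
    fun y d => (gBil_V gm (J y) d).symm.trans (hJ y (Vvec d))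
  have comp2 : ∀ y d, J y (2,d) = - ext (bigR R1 (R2const s)) y X X (Tvec d) := by
    intro y d
    have h2 := gBil_T gm (J y) d
    have h3 := hJ y (Tvec d)
    linarith
  have comp1 : ∀ y d, J y (1,d)
      = ext (bigR R1 (R2const s)) y X X (Uvec d) - ∑ b, J y (0,b) * gm b d := by
    intro y d
    have h2 := gBil_U gm (J y) d
    have h3 := hJ y (Uvec d)
    linarith
  -- J agrees with PsiMap ∘ Pmap
  have h0 : ∀ (p0 : BasisIdx s) (b : Fin s), J (Pi.single p0 1) (0,b) = 0 := by
    intro p0 b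
    rw [comp0, Vvec]
    exact extV_right R1 X p0 b
  have h1c : ∀ (p0 : BasisIdx s) (d : Fin s),
      J (Pi.single p0 1) (1,d) = ext (bigR R1 (R2const s)) (Pi.single p0 1) X X (Uvec d) := by
    intro p0 d
    rw [comp1]
    simp [h0]
  have hJeq : (J : (BasisIdx s → ℝ) →ₗ[ℝ] (BasisIdx s → ℝ))
      = (PsiMap Aco Bco).comp (Pmap s) := by
    apply LinearMap.pi_ext
    intro p x
    rw [single_smul_one p x, map_smul, map_smul]
    congr 1
    obtain ⟨i, c⟩ := p
    show J (Pi.single (i, c) 1) = PsiMap Aco Bco (Pmap s (Pi.single (i, c) 1))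
    fin_cases i
    · show J (Pi.single ((0 : Fin 3), c) 1) = PsiMap Aco Bco (Pmap s (Pi.single ((0 : Fin 3), c) 1))
      rw [Pmap_single0]
      refine funext3 (fun d => ?_) (fun d => ?_) (fun d => ?_)
      · rw [PsiMap_pair0, h0]; simp
      · rw [PsiMap_pair0, h1c, ← Uvec, extUU]
        simp [hAco_def]
      · rw [PsiMap_pair0, comp2, ← Uvec, extUT]
        simp [hBco_def]
    · show J (Pi.single ((1 : Fin 3), c) 1) = PsiMap Aco Bco (Pmap s (Pi.single ((1 : Fin 3), c) 1))
      rw [Pmap_single1, map_zero]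
      refine funext3 (fun d => ?_) (fun d => ?_) (fun d => ?_)
      · rw [h0]; simp
      · rw [h1c, Uvec, extV_left]
        simp
      · rw [comp2, Tvec, extV_left]
        simp
    · show J (Pi.single ((2 : Fin 3), c) 1) = PsiMap Aco Bco (Pmap s (Pi.single ((2 : Fin 3), c) 1))
      rw [Pmap_single2]
      refine funext3 (fun d => ?_) (fun d => ?_) (fun d => ?_)
      · rw [PsiMap_pair2, h0]; simp
      · rw [PsiMap_pair2, h1c, ← Tvec, extTU]
        simp [hBco_def]
      · rw [PsiMap_pair2, comp2, ← Tvec, extTT]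
        simp
  set uX : Fin s → ℝ := fun a => X (0,a) with huX_def
  set tX : Fin s → ℝ := fun a => X (2,a) with htX_def
  set S : ℝ := ∑ b, X (0,b) * X (0,b) with hS_def
  -- positivity of S
  have hu_ne : ¬ (∀ a : Fin s, X (0,a) = 0) := by
    intro h0'
    have hg : gBil gm X X = - ∑ a, X (2,a) * X (2,a) := by
      unfold gBil
      rw [sum3]
      simp only [sum3]
      simp [Gmat, h0', mul_ite, ite_mul, Finset.sum_ite_eq', Finset.sum_ite_eq, eq_comm]
    rw [hX] at hg
    have h4 : (0:ℝ) ≤ ∑ a, X (2,a) * X (2,a) :=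
      Finset.sum_nonneg fun b _ => mul_self_nonneg _
    linarith
  have huX_ne : uX ≠ 0 := by
    intro h
    exact hu_ne fun a => congrFun h a
  have hS_pos : 0 < S := by
    rw [hS_def]
    rcases not_forall.1 hu_ne with ⟨a, ha⟩
    exact Finset.sum_pos' (fun b _ => mul_self_nonneg _)
      ⟨a, Finset.mem_univ a, mul_self_pos.2 ha⟩
  -- B operator formula
  have hBapp : ∀ z : Fin s → ℝ, rowL Bco z =
      fun d => S * z d - (∑ c, z c * X (0,c)) * X (0,d) := by
    intro z
    funext d
    rw [rowL_apply]
    simp only [hBco_def]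
    simp [mul_sub, Finset.sum_sub_distrib, mul_ite, mul_zero,
      Finset.sum_ite_eq, Finset.sum_mul, mul_assoc]
    ring
  have hBu : rowL Bco uX = 0 := by
    rw [hBapp]
    funext d
    simp only [huX_def, Pi.zero_apply]
    rw [← hS_def]
    ring
  have hABt : rowL Aco uX + rowL Bco tX = 0 := by
    funext d
    have hT3 : ∑ c : Fin s, ∑ b : Fin s,
        (∑ e, X (0,c) * (X (0,b) * (X (0,e) * R1 c b e d))) = 0 := by
      apply sum_antisym
      intro i j
      rw [← Finset.sum_neg_distrib]
      refine Finset.sum_congr rfl fun e _ => ?_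
      rw [h1.1 i j e d]
      ring
    rw [Pi.add_apply, rowL_apply, rowL_apply, huX_def, htX_def]
    simp only [hAco_def, hBco_def]
    simp [mul_add, mul_sub, mul_ite, Finset.sum_add_distrib, Finset.sum_sub_distrib,
      Finset.sum_ite_eq, Finset.mul_sum, Finset.sum_mul, mul_assoc, Pi.zero_apply]
    have e2 : ∑ i, X (0,d) * (2 * (X (0,i) * X (2,i)))
        = (2 * X (0,d)) * ∑ i, X (0,i) * X (2,i) := by
      rw [Finset.mul_sum]
      exact Finset.sum_congr rfl fun i _ => by ring
    have e3 : ∑ x, X (0,x) * (X (0,x) * X (2,d)) = S * X (2,d) := by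
      rw [hS_def, Finset.sum_mul]
      exact Finset.sum_congr rfl fun i _ => by ring
    have e4 : ∑ x, X (0,x) * (X (2,x) * X (0,d))
        = (∑ i, X (0,i) * X (2,i)) * X (0,d) := by
      rw [Finset.sum_mul]
      exact Finset.sum_congr rfl fun i _ => by ring
    have e6 : ∑ x, X (2,x) * (X (0,x) * X (0,d))
        = (∑ i, X (0,i) * X (2,i)) * X (0,d) := by
      rw [Finset.sum_mul]
      exact Finset.sum_congr rfl fun i _ => by ring
    rw [e2, e3, e4, e6]
    linear_combination hT3
  -- J X = 0
  have hJX : J X = 0 := by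
    have hx : J X = PsiMap Aco Bco (Pmap s X) := DFunLike.congr_fun hJeq X
    rw [hx, Pmap_apply]
    funext p
    rw [PsiMap_apply]
    have e1 := congrFun hABt p.2
    have e2 := congrFun hBu p.2
    rw [Pi.add_apply] at e1
    rw [huX_def] at e1 e2
    rw [htX_def] at e1
    simp only [Pi.zero_apply] at e1 e2
    split_ifs <;> simp [e1, e2]
  have hJV : ∀ a : Fin s, J (Vvec a) = 0 := by
    intro a
    have hx : J (Vvec a) = PsiMap Aco Bco (Pmap s (Vvec a)) := DFunLike.congr_fun hJeq _
    rw [hx, Vvec, Pmap_single1, map_zero]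
  -- kernel of rowL Bco
  have hkerB : ∀ z : Fin s → ℝ, rowL Bco z = 0 → ∃ α : ℝ, z = α • uX := by
    intro z hz
    refine ⟨(∑ c, z c * X (0,c)) / S, ?_⟩
    funext d
    have h' := congrFun (hBapp z) d
    rw [hz, Pi.zero_apply] at h'
    rw [Pi.smul_apply, huX_def, smul_eq_mul]
    field_simp
    linarith
  -- kernel of PsiMap
  have hkerPsi : LinearMap.ker (PsiMap Aco Bco)
      = Submodule.span ℝ {((0 : Fin s → ℝ), uX), (uX, tX)} := by
    apply le_antisymm
    · rintro ⟨z, w⟩ hzw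
      rw [LinearMap.mem_ker] at hzw
      have hz : rowL Bco z = 0 := by
        funext d
        have h' := congrFun hzw ((2 : Fin 3), d)
        rw [PsiMap_apply] at h'
        simpa using h'
      obtain ⟨α, hα⟩ := hkerB z hz
      have hw : rowL Aco z + rowL Bco w = 0 := by
        funext d
        have h' := congrFun hzw ((1 : Fin 3), d)
        rw [PsiMap_apply] at h'
        simpa using h'
      have h5 : rowL Bco (w - α • tX) = 0 := by
        rw [map_sub, map_smul]
        have h6 : rowL Aco z = α • rowL Aco uX := by rw [hα, map_smul]
        have h7 : rowL Aco uX = - rowL Bco tX := eq_neg_of_add_eq_zero_left hABt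
        have h8 : rowL Bco w = - rowL Aco z := eq_neg_of_add_eq_zero_right hw
        rw [h8, h6, h7]
        simp
      obtain ⟨β, hβ⟩ := hkerB _ h5
      rw [Submodule.mem_span_pair]
      refine ⟨β, α, ?_⟩
      refine Prod.ext ?_ ?_
      · show β • (0 : Fin s → ℝ) + α • uX = z
        rw [smul_zero, zero_add]
        exact hα.symm
      · show β • uX + α • tX = w
        rw [sub_eq_iff_eq_add] at hβ
        exact hβ.symm
    · rw [Submodule.span_le]
      rintro x hx
      simp only [Set.mem_insert_iff, Set.mem_singleton_iff] at hx
      rcases hx with rfl | rfl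
      · rw [SetLike.mem_coe, LinearMap.mem_ker]
        funext p
        rw [PsiMap_apply]
        have e2 := congrFun hBu p.2
        rw [Pi.zero_apply] at e2
        split_ifs <;> simp [map_zero, e2]
      · rw [SetLike.mem_coe, LinearMap.mem_ker]
        funext p
        rw [PsiMap_apply]
        have e1 := congrFun hABt p.2
        rw [Pi.add_apply, Pi.zero_apply] at e1
        have e2 := congrFun hBu p.2
        rw [Pi.zero_apply] at e2
        split_ifs <;> simp [e1, e2]
  have hLI : LinearIndependent ℝ ![((0 : Fin s → ℝ), uX), (uX, tX)] := by
    rw [LinearIndependent.pair_iff' (x := ((0 : Fin s → ℝ), uX)) (by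
      intro h
      exact huX_ne (congrArg Prod.snd h))]
    intro a h
    apply huX_ne
    have := congrArg Prod.fst h
    simpa using this.symm
  have hker2 : Module.finrank ℝ (LinearMap.ker (PsiMap Aco Bco)) = 2 := by
    rw [hkerPsi, ← Matrix.range_cons_cons_empty ((0 : Fin s → ℝ), uX) (uX, tX) ![],
      finrank_span_eq_card hLI]
    simp
  have hdom : Module.finrank ℝ ((Fin s → ℝ) × (Fin s → ℝ)) = s + s := by
    rw [Module.finrank_prod, Module.finrank_fin_fun]
  have hrnJ := LinearMap.finrank_range_add_finrank_ker (PsiMap Aco Bco)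
  rw [hker2, hdom] at hrnJ
  have hrangeJ : LinearMap.range J = LinearMap.range (PsiMap Aco Bco) := by
    show LinearMap.range (J : (BasisIdx s → ℝ) →ₗ[ℝ] (BasisIdx s → ℝ)) = _
    rw [hJeq]
    exact LinearMap.range_comp_of_range_eq_top _ (LinearMap.range_eq_top.2 Pmap_surj)
  have hrkJ : Module.finrank ℝ (LinearMap.range J) = 2 * (s - 1) := by
    rw [hrangeJ]
    omega
  -- J squared
  set M2 : Fin s → Fin s → ℝ := fun c d => -(S * Bco c d) with hM2_def
  have hM2app : ∀ z : Fin s → ℝ, rowL M2 z = -(S • rowL Bco z) := by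
    intro z
    funext d
    rw [rowL_apply]
    simp only [hM2_def, Pi.neg_apply, Pi.smul_apply, rowL_apply, smul_eq_mul]
    rw [Finset.mul_sum, ← Finset.sum_neg_distrib]
    refine Finset.sum_congr rfl fun a _ => ?_
    ring
  have hdot0 : ∀ z : Fin s → ℝ, ∑ c, rowL Bco z c * X (0,c) = 0 := by
    intro z
    simp only [hBapp z]
    rw [Finset.sum_congr rfl (fun c _ => sub_mul (S * z c) _ (X (0,c))),
      Finset.sum_sub_distrib]
    have e1 : ∑ c, S * z c * X (0,c) = S * ∑ c, z c * X (0,c) := by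
      rw [Finset.mul_sum]
      exact Finset.sum_congr rfl fun c _ => by ring
    have e2 : ∑ c, (∑ c', z c' * X (0,c')) * X (0,c) * X (0,c)
        = (∑ c', z c' * X (0,c')) * S := by
      rw [hS_def, Finset.mul_sum]
      exact Finset.sum_congr rfl fun c _ => by ring
    rw [e1, e2]
    ring
  have hBB : ∀ z : Fin s → ℝ, rowL Bco (rowL Bco z) = S • rowL Bco z := by
    intro z
    rw [hBapp (rowL Bco z)]
    funext d
    rw [hdot0 z]
    rw [Pi.smul_apply, smul_eq_mul]
    ring
  have hJ2eq : ((J ^ 2 : Module.End ℝ (BasisIdx s → ℝ)) : (BasisIdx s → ℝ) →ₗ[ℝ] (BasisIdx s → ℝ))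
      = (PsiV M2).comp (P0map s) := by
    rw [pow_two]
    apply LinearMap.ext
    intro y
    rw [Module.End.mul_apply]
    have e1 : J (J y) = PsiMap Aco Bco (Pmap s (J y)) := DFunLike.congr_fun hJeq _
    have e2 : J y = PsiMap Aco Bco (Pmap s y) := DFunLike.congr_fun hJeq _
    rw [e1, e2]
    have hstep : Pmap s (PsiMap Aco Bco (Pmap s y))
        = (0, - rowL Bco (fun d => y ((0 : Fin 3), d))) := by
      rw [Pmap_apply (PsiMap Aco Bco (Pmap s y))]
      refine Prod.ext ?_ ?_
      · funext d
        dsimp only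
        rw [PsiMap_apply]
        simp
      · funext d
        dsimp only
        rw [PsiMap_apply]
        simp [Pmap_apply]
    rw [hstep]
    rw [LinearMap.comp_apply, P0map_apply]
    funext p
    rw [PsiMap_apply, PsiV_apply, hM2app]
    have hb := congrFun (hBB (fun d => y ((0 : Fin 3), d))) p.2
    split_ifs
    · simp only [map_neg, map_zero, Pi.neg_apply, Pi.zero_apply, Pi.smul_apply, smul_eq_mul]
      rw [hb]
      simp
    · simp [map_zero]
    · rfl
  have hkerV : LinearMap.ker (PsiV M2) = Submodule.span ℝ {uX} := by
    apply le_antisymm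
    · intro z hz
      rw [LinearMap.mem_ker] at hz
      have hzB : rowL Bco z = 0 := by
        funext d
        have h' := congrFun hz ((1 : Fin 3), d)
        rw [PsiV_apply] at h'
        simp at h'
        have h2' := congrFun (hM2app z) d
        rw [h'] at h2'
        simp only [Pi.neg_apply, Pi.smul_apply, smul_eq_mul, Pi.zero_apply] at h2' ⊢
        have : S * rowL Bco z d = 0 := by linarith
        rcases mul_eq_zero.1 this with h | h
        · exact absurd h (ne_of_gt hS_pos)
        · exact h
      obtain ⟨α, hα⟩ := hkerB z hzB
      rw [hα]
      exact Submodule.smul_mem _ _ (Submodule.mem_span_singleton_self _)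
    · rw [Submodule.span_le]
      rintro x hx
      simp only [Set.mem_singleton_iff] at hx
      subst hx
      rw [SetLike.mem_coe, LinearMap.mem_ker]
      funext p
      rw [PsiV_apply, hM2app, hBu]
      split_ifs <;> simp
  have hkerV1 : Module.finrank ℝ (LinearMap.ker (PsiV M2)) = 1 := by
    rw [hkerV]
    exact finrank_span_singleton huX_ne
  have hrnV := LinearMap.finrank_range_add_finrank_ker (PsiV M2)
  rw [hkerV1, Module.finrank_fin_fun] at hrnV
  have hrangeJ2 : LinearMap.range (J ^ 2) = LinearMap.range (PsiV M2) := by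
    show LinearMap.range ((J ^ 2 : Module.End ℝ (BasisIdx s → ℝ)) :
      (BasisIdx s → ℝ) →ₗ[ℝ] (BasisIdx s → ℝ)) = _
    rw [hJ2eq]
    exact LinearMap.range_comp_of_range_eq_top _ (LinearMap.range_eq_top.2 P0map_surj)
  have hrkJ2 : Module.finrank ℝ (LinearMap.range (J ^ 2)) = s - 1 := by
    rw [hrangeJ2]
    omega
  exact ⟨hJX, hJV, hrkJ, hrkJ2⟩
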